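/- For every integer ν ≥ 2, the real power series Σ_{j≥0} c_ν^j ζ_j s^j (the generating function z_0 of the generalized Catalan numbers) has radius of convergence exactly s_c = (ν−1)^{ν−1}/(c_ν · ν^ν). -/

import Mathlib

open Filter Finset Topology

private lemma aux_factorial_add_prod (n k : ℕ) :
    (n + k).factorial = n.factorial * ∏ i ∈ range k, (n + 1 + i) := by
  induction k with
  | zero => simp
  | succ k ih =>
    rw [prod_range_succ, ← mul_assoc, ← ih, ← Nat.add_assoc, Nat.factorial_succ]
    ring

private lemma aux_tendsto_linear (a b f : ℝ) {e : ℝ} (he : 0 < e) :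
    Filter.Tendsto (fun n : ℕ => (a * n + b) / (e * n + f)) Filter.atTop (𝓝 (a / e)) := by
  have h0 : Filter.Tendsto (fun n : ℕ => ((n : ℝ))⁻¹) Filter.atTop (𝓝 0) :=
    tendsto_inv_atTop_zero.comp tendsto_natCast_atTop_atTop
  have h1 : Filter.Tendsto (fun n : ℕ => (a + b * (n : ℝ)⁻¹) / (e + f * (n : ℝ)⁻¹))
      Filter.atTop (𝓝 ((a + b * 0) / (e + f * 0))) :=
    (tendsto_const_nhds.add (tendsto_const_nhds.mul h0)).div
      (tendsto_const_nhds.add (tendsto_const_nhds.mul h0)) (by simpa using he.ne')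
  simp only [mul_zero, add_zero] at h1
  refine h1.congr' ?_
  filter_upwards [Filter.eventually_ge_atTop 1] with n hn
  have hn' : (n : ℝ) ≠ 0 := by positivity
  have e1 : a * n + b = (a + b * (n : ℝ)⁻¹) * n := by field_simp
  have e2 : e * n + f = (e + f * (n : ℝ)⁻¹) * n := by field_simp
  rw [e1, e2, mul_div_mul_right _ _ hn']

/-- Key combinatorial identity for the ratio of generalized Catalan binomials. -/
private lemma aux_choose_ratio (m n : ℕ) :
    Nat.choose ((m + 1) * (n + 1)) (n + 1) *
        ((n + 1) * ∏ i ∈ range m, (m * n + 1 + i)) =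
      Nat.choose ((m + 1) * n) n * ∏ i ∈ range (m + 1), ((m + 1) * n + 1 + i) := by
  have hle : n ≤ (m + 1) * n := Nat.le_mul_of_pos_left n (Nat.succ_pos m)
  have hsub : (m + 1) * n - n = m * n := by
    rw [add_mul, one_mul, Nat.add_sub_cancel]
  have h0 : Nat.choose ((m + 1) * n) n * n.factorial * (m * n).factorial =
      ((m + 1) * n).factorial := by
    have := Nat.choose_mul_factorial_mul_factorial hle
    rwa [hsub] at this
  have hle1 : n + 1 ≤ (m + 1) * (n + 1) := Nat.le_mul_of_pos_left _ (Nat.succ_pos m)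
  have hsub1 : (m + 1) * (n + 1) - (n + 1) = m * n + m := by
    rw [add_mul, one_mul, Nat.add_sub_cancel, Nat.mul_add, Nat.mul_one]
  have h1 : Nat.choose ((m + 1) * (n + 1)) (n + 1) * (n + 1).factorial *
      (m * n + m).factorial = ((m + 1) * (n + 1)).factorial := by
    have := Nat.choose_mul_factorial_mul_factorial hle1
    rwa [hsub1] at this
  have hmn : (m + 1) * (n + 1) = (m + 1) * n + (m + 1) := by ring
  have h2 : ((m + 1) * (n + 1)).factorial =
      ((m + 1) * n).factorial * ∏ i ∈ range (m + 1), ((m + 1) * n + 1 + i) := by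
    rw [hmn, aux_factorial_add_prod]
  have h3 : (m * n + m).factorial =
      (m * n).factorial * ∏ i ∈ range m, (m * n + 1 + i) :=
    aux_factorial_add_prod (m * n) m
  apply Nat.eq_of_mul_eq_mul_right (Nat.mul_pos n.factorial_pos (m * n).factorial_pos)
  calc Nat.choose ((m + 1) * (n + 1)) (n + 1) *
        ((n + 1) * ∏ i ∈ range m, (m * n + 1 + i)) * (n.factorial * (m * n).factorial)
      = Nat.choose ((m + 1) * (n + 1)) (n + 1) * ((n + 1) * n.factorial) *
          ((m * n).factorial * ∏ i ∈ range m, (m * n + 1 + i)) := by ring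
    _ = Nat.choose ((m + 1) * (n + 1)) (n + 1) * (n + 1).factorial *
          (m * n + m).factorial := by rw [Nat.factorial_succ, h3]
    _ = ((m + 1) * n).factorial * ∏ i ∈ range (m + 1), ((m + 1) * n + 1 + i) := by
        rw [h1, h2]
    _ = Nat.choose ((m + 1) * n) n * n.factorial * (m * n).factorial *
          ∏ i ∈ range (m + 1), ((m + 1) * n + 1 + i) := by rw [h0]
    _ = _ := by ring

/-- For every integer `ν ≥ 2`, the real power series
`Σ_{j≥0} c_ν^j ζ_j s^j` (the generating function `z_0` of the generalized Catalan
numbers, with `c_ν = 2ν·binom(2ν−1, ν−1)` and `ζ_j = binom(νj, j)/((ν−1)j+1)`)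
has radius of convergence exactly `s_c = (ν−1)^{ν−1}/(c_ν ν^ν)`. -/
theorem catalan_series_radius_of_convergence (ν : ℕ) (hν : 2 ≤ ν) :
    (FormalMultilinearSeries.ofScalars ℝ
        (fun j => (2 * ν * (Nat.choose (2 * ν - 1) (ν - 1)) : ℝ) ^ j *
          ((Nat.choose (ν * j) j : ℝ) / (((ν : ℝ) - 1) * j + 1)))).radius
      = ENNReal.ofReal
          (((ν : ℝ) - 1) ^ (ν - 1) /
            ((2 * ν * (Nat.choose (2 * ν - 1) (ν - 1)) : ℝ) * (ν : ℝ) ^ ν)) := by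
  obtain ⟨m, rfl⟩ : ∃ m, ν = m + 1 := ⟨ν - 1, (Nat.succ_pred_eq_of_pos (by omega)).symm⟩
  have hm : 1 ≤ m := by omega
  have hm0 : (0 : ℝ) < m := by exact_mod_cast hm
  simp only [Nat.add_sub_cancel, Nat.cast_add, Nat.cast_one, add_sub_cancel_right]
  set c : ℝ := 2 * ((m : ℝ) + 1) * (Nat.choose (2 * (m + 1) - 1) m : ℝ) with hc
  have hcpos : 0 < c := by
    have h1 : (0 : ℝ) < Nat.choose (2 * (m + 1) - 1) m := by
      exact_mod_cast Nat.choose_pos (by omega)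
    positivity
  have hchoose_pos : ∀ n : ℕ, 0 < (Nat.choose ((m + 1) * n) n : ℝ) := fun n => by
    exact_mod_cast Nat.choose_pos (Nat.le_mul_of_pos_left n (Nat.succ_pos m))
  set a : ℕ → ℝ := fun j => c ^ j *
      ((Nat.choose ((m + 1) * j) j : ℝ) / ((m : ℝ) * j + 1)) with ha
  -- limit of the ratio of binomial coefficients
  have hQ : Filter.Tendsto (fun n : ℕ =>
      (Nat.choose ((m + 1) * (n + 1)) (n + 1) : ℝ) / (Nat.choose ((m + 1) * n) n : ℝ))
      Filter.atTop (𝓝 (((m : ℝ) + 1) * (((m : ℝ) + 1) / m) ^ m)) := by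
    have heq : ∀ n : ℕ,
        (Nat.choose ((m + 1) * (n + 1)) (n + 1) : ℝ) / (Nat.choose ((m + 1) * n) n : ℝ)
          = ((((m : ℝ) + 1) * n + 1) / ((1 : ℝ) * n + 1)) *
            ∏ i ∈ range m, ((((m : ℝ) + 1) * n + (2 + i)) / ((m : ℝ) * n + (1 + i))) := by
      intro n
      have keyR : (Nat.choose ((m + 1) * (n + 1)) (n + 1) : ℝ) *
          (((n : ℝ) + 1) * ∏ i ∈ range m, ((m : ℝ) * n + (1 + i))) =
          (Nat.choose ((m + 1) * n) n : ℝ) *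
          ∏ i ∈ range (m + 1), (((m : ℝ) + 1) * n + (1 + i)) := by
        have h := congrArg (Nat.cast : ℕ → ℝ) (aux_choose_ratio m n)
        push_cast at h
        have e1 : ∏ i ∈ range m, ((m : ℝ) * n + (1 + i)) =
            ∏ i ∈ range m, ((m : ℝ) * n + 1 + i) :=
          Finset.prod_congr rfl fun i _ => by ring
        have e2 : ∏ i ∈ range (m + 1), (((m : ℝ) + 1) * n + (1 + i)) =
            ∏ i ∈ range (m + 1), (((m : ℝ) + 1) * n + 1 + i) :=
          Finset.prod_congr rfl fun i _ => by ring
        rw [e1, e2]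
        exact h
      have hnum : ∏ i ∈ range (m + 1), (((m : ℝ) + 1) * n + (1 + i))
          = (((m : ℝ) + 1) * n + 1) *
            ∏ i ∈ range m, (((m : ℝ) + 1) * n + (2 + i)) := by
        rw [Finset.prod_range_succ']
        push_cast
        have e3 : ∏ i ∈ range m, (((m : ℝ) + 1) * n + (1 + ((i : ℝ) + 1))) =
            ∏ i ∈ range m, (((m : ℝ) + 1) * n + (2 + i)) :=
          Finset.prod_congr rfl fun i _ => by ring
        rw [e3]
        ring
      have hden_ne : ((n : ℝ) + 1) * ∏ i ∈ range m, ((m : ℝ) * n + (1 + i)) ≠ 0 := by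
        apply mul_ne_zero (by positivity)
        exact Finset.prod_ne_zero_iff.mpr fun i _ => by positivity
      have hc0 : (Nat.choose ((m + 1) * n) n : ℝ) ≠ 0 := (hchoose_pos n).ne'
      have hrat : (Nat.choose ((m + 1) * (n + 1)) (n + 1) : ℝ) /
            (Nat.choose ((m + 1) * n) n : ℝ)
          = (∏ i ∈ range (m + 1), (((m : ℝ) + 1) * n + (1 + i))) /
            (((n : ℝ) + 1) * ∏ i ∈ range m, ((m : ℝ) * n + (1 + i))) := by
        rw [div_eq_div_iff hc0 hden_ne]
        linear_combination keyR
      rw [hrat, hnum, Finset.prod_div_distrib, div_mul_div_comm, one_mul]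
    refine Filter.Tendsto.congr (fun n => (heq n).symm) ?_
    have hlim1 : Filter.Tendsto (fun n : ℕ => ((((m : ℝ) + 1) * n + 1) / ((1 : ℝ) * n + 1)))
        Filter.atTop (𝓝 (((m : ℝ) + 1) / 1)) := aux_tendsto_linear _ 1 1 one_pos
    have hlim2 : Filter.Tendsto (fun n : ℕ =>
        ∏ i ∈ range m, ((((m : ℝ) + 1) * n + (2 + i)) / ((m : ℝ) * n + (1 + i))))
        Filter.atTop (𝓝 (∏ _i ∈ range m, (((m : ℝ) + 1) / m))) :=
      tendsto_finset_prod _ (fun i _ => aux_tendsto_linear _ _ _ hm0)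
    have h := hlim1.mul hlim2
    rw [div_one, Finset.prod_const, Finset.card_range] at h
    exact h
  -- limit of the full coefficient ratio
  set L : ℝ := c * (((m : ℝ) + 1) * (((m : ℝ) + 1) / m) ^ m) with hL
  have hLpos : 0 < L := by positivity
  have hratio : Filter.Tendsto (fun n : ℕ => ‖a (n + 1)‖ / ‖a n‖) Filter.atTop (𝓝 L) := by
    have hnorm : ∀ n : ℕ, ‖a n‖ = a n := fun n => by
      rw [Real.norm_of_nonneg]
      have h1 := hchoose_pos n
      have h2 : (0 : ℝ) < (m : ℝ) * n + 1 := by positivity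
      rw [ha]
      positivity
    have heq : ∀ n : ℕ, a (n + 1) / a n =
        c * ((Nat.choose ((m + 1) * (n + 1)) (n + 1) : ℝ) /
            (Nat.choose ((m + 1) * n) n : ℝ)) *
          (((m : ℝ) * n + 1) / ((m : ℝ) * n + ((m : ℝ) + 1))) := by
      intro n
      have h1 : (0 : ℝ) < (m : ℝ) * n + 1 := by positivity
      have h2 : (0 : ℝ) < (m : ℝ) * n + ((m : ℝ) + 1) := by positivity
      have hc0 : (Nat.choose ((m + 1) * n) n : ℝ) ≠ 0 := (hchoose_pos n).ne'
      rw [ha]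
      simp only
      rw [pow_succ]
      have hcast2 : (m : ℝ) * ((n : ℕ) + 1 : ℕ) + 1 = (m : ℝ) * n + ((m : ℝ) + 1) := by
        push_cast; ring
      rw [hcast2]
      field_simp
    have h3 : Filter.Tendsto
        (fun n : ℕ => (((m : ℝ) * n + 1) / ((m : ℝ) * n + ((m : ℝ) + 1))))
        Filter.atTop (𝓝 ((m : ℝ) / m)) := aux_tendsto_linear _ _ _ hm0
    have h := ((tendsto_const_nhds : Filter.Tendsto (fun _ : ℕ => c) Filter.atTop (𝓝 c)).mul hQ).mul h3
    rw [div_self hm0.ne', mul_one] at h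
    refine Filter.Tendsto.congr (fun n => ?_) h
    rw [hnorm, hnorm, heq]
  -- apply the ratio test for the radius of convergence
  have hr0 : L.toNNReal ≠ 0 := by
    simp [Real.toNNReal_eq_zero, not_le, hLpos]
  have hrad := FormalMultilinearSeries.ofScalars_radius_eq_inv_of_tendsto ℝ a hr0
    (by rw [Real.coe_toNNReal _ hLpos.le]; exact hratio)
  rw [hrad]
  -- identify the inverse
  have hT : ((m : ℝ)) ^ m / (c * ((m : ℝ) + 1) ^ (m + 1)) = L⁻¹ := by
    have hLval : L = c * ((m : ℝ) + 1) ^ (m + 1) / (m : ℝ) ^ m := by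
      rw [hL, div_pow, pow_succ]; ring
    rw [hLval, inv_div]
  rw [hT, ENNReal.ofReal_inv_of_pos hLpos, ENNReal.coe_inv hr0]
  rfl
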